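/- (Proposition 2.1.) For any sampling strategy (q_t), any betting strategy (λ_t(m*)), and any δ ∈ (0,1), the wealth process at the true misstated fraction satisfies P(∃ t ∈ {1,…,N} : W_t(m*) ≥ 1/δ) ≤ δ. -/

import Mathlib

open MeasureTheory Finset
open scoped ENNReal NNReal

namespace RLFA

variable {Ω : Type*}

/-- `remaining I t ω` is the set `N_t = {1,…,N} \ {I_1, …, I_{t-1}}` of indices not yet
sampled before time `t`. -/
def remaining {N : ℕ} (I : ℕ → Ω → Fin N) (t : ℕ) (ω : Ω) : Finset (Fin N) :=
  Finset.univ \ (Finset.Icc 1 (t - 1)).image fun j => I j ω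

/-- The filtration `F_t = σ(I_1, …, I_t)`. -/
def filt {N : ℕ} (I : ℕ → Ω → Fin N) (t : ℕ) : MeasurableSpace Ω :=
  ⨆ j ∈ Finset.Icc 1 t, MeasurableSpace.comap (I j) ⊤

/-- The importance-weighted observation `Z_t = f(I_t) · π(I_t) / q_t(I_t)`. -/
noncomputable def Zt {N : ℕ} (π f : Fin N → ℝ) (q : ℕ → Ω → Fin N → ℝ)
    (I : ℕ → Ω → Fin N) (t : ℕ) (ω : Ω) : ℝ :=
  f (I t ω) * (π (I t ω) / q t ω (I t ω))

/-- `μ_t(m) = m − Σ_{j=1}^{t−1} π(I_j) f(I_j)`. -/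
def muT {N : ℕ} (π f : Fin N → ℝ) (I : ℕ → Ω → Fin N) (m : ℝ) (t : ℕ) (ω : Ω) : ℝ :=
  m - ∑ j ∈ Finset.Icc 1 (t - 1), π (I j ω) * f (I j ω)

set_option maxHeartbeats 1000000
set_option synthInstance.maxHeartbeats 400000

lemma filt_mono {N : ℕ} (I : ℕ → Ω → Fin N) : Monotone (filt I) := by
  intro s t hst
  exact biSup_mono fun j hj => Finset.mem_Icc.2 ⟨(Finset.mem_Icc.1 hj).1,
    le_trans (Finset.mem_Icc.1 hj).2 hst⟩

lemma filt_le {N : ℕ} [m0 : MeasurableSpace Ω] (I : ℕ → Ω → Fin N)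
    (hI : ∀ t, Measurable (I t)) (t : ℕ) : filt I t ≤ m0 := by
  refine iSup₂_le fun j _ => ?_
  intro s hs
  obtain ⟨u, -, rfl⟩ := hs
  exact hI j ((Set.toFinite u).measurableSet)

lemma measurable_I {N : ℕ} (I : ℕ → Ω → Fin N) {j t : ℕ} (h1 : 1 ≤ j) (h2 : j ≤ t) :
    Measurable[filt I t] (I j) := by
  rw [measurable_iff_comap_le]
  refine le_trans (MeasurableSpace.comap_mono le_top) ?_
  exact le_iSup_of_le j (le_iSup_of_le (Finset.mem_Icc.2 ⟨h1, h2⟩) le_rfl)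

/-- **Proposition 2.1.** For any sampling strategy `(q_t)`, any betting strategy
`(λ_t(m*))`, and any `δ ∈ (0,1)`, the wealth process at the true misstated fraction satisfies
`P(∃ t ∈ {1,…,N} : W_t(m*) ≥ 1/δ) ≤ δ`. -/
theorem statement2
    [m0 : MeasurableSpace Ω] (μ : Measure Ω) [IsProbabilityMeasure μ]
    {N : ℕ} (hN : 1 ≤ N)
    (π f : Fin N → ℝ)
    (hπ : ∀ i, π i ∈ Set.Ioc (0 : ℝ) 1) (hπsum : ∑ i, π i = 1)
    (hf : ∀ i, f i ∈ Set.Icc (0 : ℝ) 1)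
    (I : ℕ → Ω → Fin N) (hI : ∀ t, Measurable (I t))
    (q : ℕ → Ω → Fin N → ℝ)
    (hq_meas : ∀ t, 1 ≤ t → t ≤ N → ∀ i,
      StronglyMeasurable[filt I (t - 1)] fun ω => q t ω i)
    (hq_pos : ∀ t ω, 1 ≤ t → t ≤ N → ∀ i ∈ remaining I t ω, 0 < q t ω i)
    (hq_sum : ∀ t ω, 1 ≤ t → t ≤ N → ∑ i ∈ remaining I t ω, q t ω i = 1)
    (hWoR : ∀ t ω, 1 ≤ t → t ≤ N → I t ω ∈ remaining I t ω)
    (hcond : ∀ t, 1 ≤ t → t ≤ N → ∀ G : Ω → Fin N → ℝ,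
      (∀ i, StronglyMeasurable[filt I (t - 1)] fun ω => G ω i) →
      μ[(fun ω => G ω (I t ω)) | filt I (t - 1)]
        =ᵐ[μ] fun ω => ∑ i ∈ remaining I t ω, q t ω i * G ω i)
    (mstar : ℝ) (hmstar : mstar = ∑ i, π i * f i)
    (lam : ℕ → Ω → ℝ)
    (hlam_meas : ∀ t, 1 ≤ t → t ≤ N → StronglyMeasurable[filt I (t - 1)] (lam t))
    (hfac : ∀ t, 1 ≤ t → t ≤ N →
      ∀ᵐ ω ∂μ, 0 ≤ 1 + lam t ω * (Zt π f q I t ω - muT π f I mstar t ω))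
    (W : ℕ → Ω → ℝ)
    (hW0 : ∀ ω, W 0 ω = 1)
    (hWrec : ∀ t, 1 ≤ t → t ≤ N → ∀ ω,
      W t ω = W (t - 1) ω * (1 + lam t ω * (Zt π f q I t ω - muT π f I mstar t ω)))
    (δ : ℝ) (hδ : δ ∈ Set.Ioo (0 : ℝ) 1) :
    μ {ω | ∃ t, 1 ≤ t ∧ t ≤ N ∧ 1 / δ ≤ W t ω} ≤ ENNReal.ofReal δ := by
  obtain ⟨hδ0, hδ1⟩ := hδ
  have hfle : ∀ t, filt I t ≤ m0 := filt_le I hI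
  have hfmono : Monotone (filt I) := filt_mono I
  -- measurability of W t
  have measW : ∀ t, t ≤ N → Measurable[filt I t] (W t) := by
    intro t
    induction t with
    | zero =>
      intro _
      have : W 0 = fun _ => (1 : ℝ) := funext hW0
      rw [this]; exact measurable_const
    | succ n ih =>
      intro hn
      have hn' : n ≤ N := Nat.le_of_succ_le hn
      have h1 : 1 ≤ n + 1 := Nat.succ_le_succ (Nat.zero_le n)
      have hWe : W (n + 1) = fun ω =>
          W n ω * (1 + lam (n + 1) ω * (Zt π f q I (n + 1) ω - muT π f I mstar (n + 1) ω)) :=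
        funext fun ω => hWrec (n + 1) h1 hn ω
      rw [hWe]
      have hmono : filt I n ≤ filt I (n + 1) := hfmono (Nat.le_succ n)
      have hIt : Measurable[filt I (n + 1)] (I (n + 1)) := measurable_I I h1 le_rfl
      have hqIt : Measurable[filt I (n + 1)] fun ω => q (n + 1) ω (I (n + 1) ω) := by
        have heq : (fun ω => q (n + 1) ω (I (n + 1) ω))
            = fun ω => ∑ i : Fin N, if I (n + 1) ω = i then q (n + 1) ω i else 0 := by
          funext ω; rw [Finset.sum_ite_eq]; simp
        rw [heq]
        refine Finset.measurable_sum _ fun i _ => Measurable.ite ?_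
          (((hq_meas (n + 1) h1 hn i).measurable).le hmono) measurable_const
        exact hIt (measurableSet_singleton i)
      have hZ : Measurable[filt I (n + 1)] (Zt π f q I (n + 1)) := by
        unfold Zt
        exact ((measurable_of_countable f).comp hIt).mul
          (((measurable_of_countable π).comp hIt).div hqIt)
      have hmu : Measurable[filt I (n + 1)] (muT π f I mstar (n + 1)) := by
        unfold muT
        refine measurable_const.sub (Finset.measurable_sum _ fun j hj => ?_)
        have hj' := Finset.mem_Icc.1 hj
        have hIj : Measurable[filt I (n + 1)] (I j) :=
          measurable_I I hj'.1 (le_trans hj'.2 (by omega))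
        exact ((measurable_of_countable π).comp hIj).mul ((measurable_of_countable f).comp hIj)
      exact ((ih hn').le hmono).mul
        (measurable_const.add ((((hlam_meas (n + 1) h1 hn).measurable).le hmono).mul
          (hZ.sub hmu)))
  -- sum over remaining indices equals muT
  have hsum_rem : ∀ t ω, 1 ≤ t → t ≤ N →
      ∑ i ∈ remaining I t ω, π i * f i = muT π f I mstar t ω := by
    intro t ω ht1 htN
    have hinj : ∀ x ∈ Finset.Icc 1 (t - 1), ∀ y ∈ Finset.Icc 1 (t - 1),
        I x ω = I y ω → x = y := by
      have key : ∀ x y, x ∈ Finset.Icc 1 (t - 1) → y ∈ Finset.Icc 1 (t - 1) → x < y →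
          I x ω ≠ I y ω := by
        intro x y hx hy hxy heq
        rw [Finset.mem_Icc] at hx hy
        have h2 : y ≤ N := le_trans hy.2 (le_trans (Nat.sub_le t 1) htN)
        have hmem := hWoR y ω hy.1 h2
        rw [remaining, Finset.mem_sdiff] at hmem
        exact hmem.2 (Finset.mem_image.2 ⟨x,
          Finset.mem_Icc.2 ⟨hx.1, by omega⟩, heq⟩)
      intro x hx y hy hxy
      rcases lt_trichotomy x y with h | h | h
      · exact absurd hxy (key x y hx hy h)
      · exact h
      · exact absurd hxy.symm (key y x hy hx h)
    rw [remaining, Finset.sum_sdiff_eq_sub (Finset.subset_univ _),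
      Finset.sum_image hinj, muT, ← hmstar]
  -- the martingale step
  have hstep : ∀ t, 1 ≤ t → t ≤ N → μ[W t | filt I (t - 1)] =ᵐ[μ] W (t - 1) := by
    intro t ht1 htN
    set G : Ω → Fin N → ℝ := fun ω i =>
      W (t - 1) ω * (1 + lam t ω * (f i * (π i / q t ω i) - muT π f I mstar t ω)) with hG
    have hmuMeas : Measurable[filt I (t - 1)] (muT π f I mstar t) := by
      unfold muT
      refine measurable_const.sub (Finset.measurable_sum _ fun j hj => ?_)
      have hj' := Finset.mem_Icc.1 hj
      have hIj : Measurable[filt I (t - 1)] (I j) := measurable_I I hj'.1 hj'.2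
      exact ((measurable_of_countable π).comp hIj).mul ((measurable_of_countable f).comp hIj)
    have hGmeas : ∀ i, StronglyMeasurable[filt I (t - 1)] fun ω => G ω i := by
      intro i
      refine Measurable.stronglyMeasurable ?_
      refine (measW (t - 1) (le_trans (Nat.sub_le t 1) htN)).mul ?_
      refine measurable_const.add (((hlam_meas t ht1 htN).measurable).mul ?_)
      exact (measurable_const.mul (measurable_const.div (hq_meas t ht1 htN i).measurable)).sub
        hmuMeas
    have hWeq : (fun ω => G ω (I t ω)) = W t := by
      funext ω; rw [hWrec t ht1 htN ω]; rfl
    have h1 := hcond t ht1 htN G hGmeas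
    rw [hWeq] at h1
    refine h1.trans (Filter.Eventually.of_forall fun ω => ?_)
    have hterm : ∀ i ∈ remaining I t ω, q t ω i * G ω i =
        W (t - 1) ω * q t ω i + (W (t - 1) ω * lam t ω) * (π i * f i)
          - (W (t - 1) ω * lam t ω * muT π f I mstar t ω) * q t ω i := by
      intro i hi
      have hqi : q t ω i ≠ 0 := ne_of_gt (hq_pos t ω ht1 htN i hi)
      simp only [hG]
      field_simp
      ring
    calc ∑ i ∈ remaining I t ω, q t ω i * G ω i
        = ∑ i ∈ remaining I t ω, (W (t - 1) ω * q t ω i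
            + (W (t - 1) ω * lam t ω) * (π i * f i)
            - (W (t - 1) ω * lam t ω * muT π f I mstar t ω) * q t ω i) :=
          Finset.sum_congr rfl hterm
      _ = W (t - 1) ω * (∑ i ∈ remaining I t ω, q t ω i)
            + (W (t - 1) ω * lam t ω) * (∑ i ∈ remaining I t ω, π i * f i)
            - (W (t - 1) ω * lam t ω * muT π f I mstar t ω)
              * (∑ i ∈ remaining I t ω, q t ω i) := by
          rw [Finset.sum_sub_distrib, Finset.sum_add_distrib, ← Finset.mul_sum,
            ← Finset.mul_sum, ← Finset.mul_sum]
      _ = W (t - 1) ω := by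
          rw [hq_sum t ω ht1 htN, hsum_rem t ω ht1 htN]; ring
  -- integrability and unit expectation
  have hint : ∀ t, t ≤ N → Integrable (W t) μ ∧ ∫ ω, W t ω ∂μ = 1 := by
    intro t
    induction t with
    | zero =>
      intro _
      have : W 0 = fun _ => (1 : ℝ) := funext hW0
      rw [this]
      exact ⟨integrable_const 1, by simp⟩
    | succ n ih =>
      intro hn
      have hn' : n ≤ N := Nat.le_of_succ_le hn
      have ihn := ih hn'
      have h1 : 1 ≤ n + 1 := Nat.succ_le_succ (Nat.zero_le n)
      have hst := hstep (n + 1) h1 hn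
      simp only [Nat.add_sub_cancel] at hst
      have hInt : Integrable (W (n + 1)) μ := by
        by_contra hni
        have h0 : μ[W (n + 1) | filt I n] = 0 := condExp_of_not_integrable hni
        rw [h0] at hst
        have : ∫ ω, W n ω ∂μ = 0 := by
          rw [integral_congr_ae hst.symm]; simp
        rw [ihn.2] at this
        exact one_ne_zero this
      refine ⟨hInt, ?_⟩
      calc ∫ ω, W (n + 1) ω ∂μ = ∫ ω, (μ[W (n + 1) | filt I n]) ω ∂μ :=
            (integral_condExp (hfle n)).symm
        _ = ∫ ω, W n ω ∂μ := integral_congr_ae hst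
        _ = 1 := ihn.2
  -- a.e. nonnegativity
  have hposW : ∀ t, t ≤ N → 0 ≤ᵐ[μ] W t := by
    intro t
    induction t with
    | zero => intro _; exact Filter.Eventually.of_forall fun ω => by simp [hW0]
    | succ n ih =>
      intro hn
      have h1 : 1 ≤ n + 1 := Nat.succ_le_succ (Nat.zero_le n)
      filter_upwards [ih (Nat.le_of_succ_le hn), hfac (n + 1) h1 hn] with ω hw hfc
      rw [hWrec (n + 1) h1 hn ω]
      exact mul_nonneg hw hfc
  -- the filtration and the (stopped) martingale
  set 𝒢 : Filtration ℕ m0 :=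
    ⟨fun t => filt I (min t N), fun a b hab => hfmono (min_le_min hab le_rfl),
      fun t => hfle _⟩ with h𝒢
  have h𝒢app : ∀ t, 𝒢 t = filt I (min t N) := fun t => rfl
  have hmart : Martingale (fun t => W (min t N)) 𝒢 μ := by
    refine martingale_nat (fun t => ?_) (fun t => (hint (min t N) (min_le_right _ _)).1)
      (fun i => ?_)
    · exact (measW (min t N) (min_le_right _ _)).stronglyMeasurable
    · by_cases h : i < N
      · have e1 : min (i + 1) N = i + 1 := min_eq_left h
        have e2 : min i N = i := min_eq_left (le_of_lt h)
        rw [h𝒢app, e1, e2]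
        have hst := hstep (i + 1) (Nat.succ_le_succ (Nat.zero_le i)) h
        simp only [Nat.add_sub_cancel] at hst
        exact hst.symm
      · push_neg at h
        have e1 : min (i + 1) N = N := min_eq_right (by omega)
        have e2 : min i N = N := min_eq_right h
        rw [h𝒢app, e1, e2]
        rw [condExp_of_stronglyMeasurable (hfle N) (measW N le_rfl).stronglyMeasurable
          (hint N le_rfl).1]
  have hsubm : Submartingale ((fun t => W (min t N))⁺) 𝒢 μ := hmart.submartingale.pos
  have hPP : ∀ (k : ℕ) ω, ((fun t => W (min t N))⁺) k ω = max (W (min k N) ω) 0 := by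
    intro k ω
    simp [posPart_def, Pi.sup_apply]
  have hnn : 0 ≤ (fun t => W (min t N))⁺ := by
    intro k ω
    rw [hPP k ω]
    exact le_max_right _ _
  set ε : ℝ≥0 := Real.toNNReal (1 / δ) with hε
  have hεR : (ε : ℝ) = 1 / δ := Real.coe_toNNReal _ (by positivity)
  have hmax := maximal_ineq hsubm hnn (ε := ε) N
  set S := {ω | (ε : ℝ) ≤ (Finset.range (N + 1)).sup' nonempty_range_add_one
    fun k => ((fun t => W (min t N))⁺) k ω} with hS
  -- our event is contained in S
  have hES : {ω | ∃ t, 1 ≤ t ∧ t ≤ N ∧ 1 / δ ≤ W t ω} ⊆ S := by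
    intro ω hω
    obtain ⟨t, ht1, htN, hWt⟩ := hω
    have htmem : t ∈ Finset.range (N + 1) := Finset.mem_range.2 (by omega)
    refine le_trans ?_ (Finset.le_sup' (fun k => ((fun t => W (min t N))⁺) k ω) htmem)
    rw [hPP t ω, min_eq_left htN, hεR]
    exact le_trans hWt (le_max_left _ _)
  -- bound ∫_S (W⁺) N ≤ 1
  have hintS : ∫ ω in S, ((fun t => W (min t N))⁺) N ω ∂μ ≤ 1 := by
    have hIntN : Integrable (((fun t => W (min t N))⁺) N) μ := hsubm.integrable N
    have hnnN : 0 ≤ᵐ[μ] ((fun t => W (min t N))⁺) N :=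
      Filter.Eventually.of_forall fun ω => hnn N ω
    refine le_trans (setIntegral_le_integral hIntN hnnN) ?_
    have heqN : ((fun t => W (min t N))⁺) N =ᵐ[μ] W N := by
      filter_upwards [hposW N le_rfl] with ω hw
      have hw' : (0 : ℝ) ≤ W N ω := hw
      rw [hPP N ω, min_self]
      exact max_eq_left hw'
    rw [integral_congr_ae heqN, (hint N le_rfl).2]
  -- conclude
  have hmax1 : ENNReal.ofReal (1 / δ) * μ S ≤ 1 := by
    have hcoe : (ε : ℝ≥0∞) = ENNReal.ofReal (1 / δ) := by rw [hε]; rfl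
    rw [← hcoe]
    calc (ε : ℝ≥0∞) * μ S = ε • μ S := by rw [ENNReal.smul_def, smul_eq_mul]
      _ ≤ ENNReal.ofReal (∫ ω in S, ((fun t => W (min t N))⁺) N ω ∂μ) := hmax
      _ ≤ ENNReal.ofReal 1 := ENNReal.ofReal_le_ofReal hintS
      _ = 1 := ENNReal.ofReal_one
  have hprod : ENNReal.ofReal δ * ENNReal.ofReal (1 / δ) = 1 := by
    rw [← ENNReal.ofReal_mul (le_of_lt hδ0)]
    rw [mul_one_div, div_self (ne_of_gt hδ0), ENNReal.ofReal_one]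
  calc μ {ω | ∃ t, 1 ≤ t ∧ t ≤ N ∧ 1 / δ ≤ W t ω} ≤ μ S := measure_mono hES
    _ = (ENNReal.ofReal δ * ENNReal.ofReal (1 / δ)) * μ S := by rw [hprod, one_mul]
    _ = ENNReal.ofReal δ * (ENNReal.ofReal (1 / δ) * μ S) := mul_assoc _ _ _
    _ ≤ ENNReal.ofReal δ * 1 := mul_le_mul_right hmax1 _
    _ = ENNReal.ofReal δ := mul_one _

end RLFA
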